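/- Let G = (V,E) be a DAG and Π a partition of V with i ∼_Π j for distinct nodes i, j (i.e. i and j lie in the same block). Let A_i ⊆ V\{i} and A_j ⊆ V\{j} satisfy pa(i) ⊆ A_i ⊆ V \ de(i) and pa(j) ⊆ A_j ⊆ V \ de(j). Then every covariance matrix Σ ∈ M_{G,Π} satisfies Σ_{ii} − Σ_{i,A_i}(Σ_{A_i,A_i})^{-1}Σ_{A_i,i} = Σ_{jj} − Σ_{j,A_j}(Σ_{A_j,A_j})^{-1}Σ_{A_j,j}. -/

import Mathlib

open Matrix Finset

/-- The conditional variance `Σ_{ii} - Σ_{i,A} (Σ_{A,A})⁻¹ Σ_{A,i}` of variable `i`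
given the variables in `A`. -/
noncomputable def condVar {V : Type*} [Fintype V] [DecidableEq V]
    (Cov : Matrix V V ℝ) (i : V) (A : Finset V) : ℝ :=
  Cov i i - ∑ a : A, ∑ b : A,
    Cov i a * (Cov.submatrix (Subtype.val : A → V) Subtype.val)⁻¹ a b * Cov b i

/-- The partially homoscedastic linear Gaussian model `M_{G,Π}`: covariance matrices
`(I-Λ)^{-T} diag(ω) (I-Λ)^{-1}` with `Λ` supported on the edges `E` and `ω` positive,
where `ω a = ω b` whenever `a` and `b` are in the same block of the partition
(encoded by the equivalence relation `r`). -/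
def PHModel {V : Type*} [Fintype V] [DecidableEq V]
    (E : V → V → Prop) (r : V → V → Prop) : Set (Matrix V V ℝ) :=
  {C | ∃ (Λ : Matrix V V ℝ) (ω : V → ℝ),
    (∀ a b, ¬ E a b → Λ a b = 0) ∧ (∀ a, 0 < ω a) ∧
    (∀ a b, r a b → ω a = ω b) ∧
    C = ((1 - Λ)ᵀ)⁻¹ * Matrix.diagonal ω * (1 - Λ)⁻¹}


section Helpers
variable {V : Type*} [Fintype V] [DecidableEq V]

lemma pow_entry (E : V → V → Prop) (Λ : Matrix V V ℝ) (hΛ : ∀ a b, ¬ E a b → Λ a b = 0) :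
    ∀ k p q, (Λ ^ k) p q ≠ 0 → (k = 0 ∧ p = q) ∨ Relation.TransGen E p q := by
  intro k
  induction k with
  | zero =>
    intro p q h
    rw [pow_zero] at h
    by_cases hpq : p = q
    · exact Or.inl ⟨rfl, hpq⟩
    · simp [Matrix.one_apply_ne hpq] at h
  | succ n ih =>
    intro p q h
    rw [pow_succ, Matrix.mul_apply] at h
    obtain ⟨b, -, hb⟩ := Finset.exists_ne_zero_of_sum_ne_zero h
    have h1 : (Λ ^ n) p b ≠ 0 := fun h0 => hb (by rw [h0, zero_mul])
    have h2 : Λ b q ≠ 0 := fun h0 => hb (by rw [h0, mul_zero])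
    have hE : E b q := by by_contra hE; exact h2 (hΛ _ _ hE)
    rcases ih p b h1 with ⟨-, rfl⟩ | htg
    · exact Or.inr (Relation.TransGen.single hE)
    · exact Or.inr (htg.tail hE)

lemma nilp (E : V → V → Prop) (hacyc : ∀ v, ¬ Relation.TransGen E v v)
    (Λ : Matrix V V ℝ) (hΛ : ∀ a b, ¬ E a b → Λ a b = 0) :
    Λ ^ Fintype.card V = 0 := by
  classical
  set g : V → ℕ := fun a => {x | Relation.ReflTransGen E a x}.ncard with hg
  have hg1 : ∀ a, 0 < g a := fun a =>
    (Set.ncard_pos (Set.toFinite _)).mpr ⟨a, Relation.ReflTransGen.refl⟩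
  have hgdec : ∀ a b, E a b → g b < g a := by
    intro a b hab
    apply Set.ncard_lt_ncard _ (Set.toFinite _)
    have hsub : {x | Relation.ReflTransGen E b x} ⊆ {x | Relation.ReflTransGen E a x} :=
      fun x hx => Relation.ReflTransGen.head hab hx
    rw [Set.ssubset_iff_of_subset hsub]
    exact ⟨a, Relation.ReflTransGen.refl, fun hba => hacyc a (Relation.TransGen.head' hab hba)⟩
  have hgcard : ∀ a, g a ≤ Fintype.card V := by
    intro a
    have := Set.ncard_le_ncard (Set.subset_univ {x | Relation.ReflTransGen E a x}) Set.finite_univ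
    rwa [Set.ncard_univ, Nat.card_eq_fintype_card] at this
  have key : ∀ m p q, g p ≤ m → (Λ ^ m) p q = 0 := by
    intro m
    induction m with
    | zero => intro p q hp; exact absurd hp (by have := hg1 p; omega)
    | succ n ih =>
      intro p q hp
      rw [pow_succ', Matrix.mul_apply]
      apply Finset.sum_eq_zero
      intro b _
      by_cases hb : Λ p b = 0
      · rw [hb, zero_mul]
      · have hE : E p b := by by_contra hE; exact hb (hΛ _ _ hE)
        have : g b ≤ n := by have := hgdec p b hE; omega
        rw [ih b q this, mul_zero]
  ext p q
  rw [key _ p q (hgcard p)]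
  rfl

lemma aux (E : V → V → Prop) (hacyc : ∀ v, ¬ Relation.TransGen E v v)
    (Λ : Matrix V V ℝ) (hΛ : ∀ a b, ¬ E a b → Λ a b = 0)
    (ω : V → ℝ) (hω : ∀ a, 0 < ω a)
    (i : V) (Ai : Finset V) (hiAi : i ∉ Ai)
    (hpai : ∀ k, E k i → k ∈ Ai) (hdei : ∀ a ∈ Ai, ¬ Relation.ReflTransGen E i a) :
    condVar (((1 - Λ)ᵀ)⁻¹ * Matrix.diagonal ω * (1 - Λ)⁻¹) i Ai = ω i := by
  classical
  set N := Fintype.card V with hNdef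
  have hN : 0 < N := Fintype.card_pos_iff.mpr ⟨i⟩
  set C : Matrix V V ℝ := ∑ k ∈ Finset.range N, Λ ^ k with hCdef
  -- geometric series inverse
  have hgs : C * (Λ - 1) = -1 := by
    have h := geom_sum_mul Λ N
    rw [nilp E hacyc Λ hΛ, zero_sub] at h
    exact h
  have hCB : C * (1 - Λ) = 1 := by
    have : C * (1 - Λ) = -(C * (Λ - 1)) := by
      rw [mul_sub, mul_sub, mul_one, neg_sub]
    rw [this, hgs, neg_neg]
  have hcomm : Λ * C = C * Λ := by
    rw [hCdef, Finset.mul_sum, Finset.sum_mul]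
    exact Finset.sum_congr rfl fun k _ => by rw [← pow_succ, ← pow_succ']
  have hBC : (1 - Λ) * C = 1 := by
    have h2 := hCB
    rw [mul_sub, mul_one] at h2
    rw [sub_mul, one_mul, hcomm]
    exact h2
  have hBinv : (1 - Λ)⁻¹ = C := Matrix.inv_eq_right_inv hBC
  have hBTinv : ((1 - Λ)ᵀ)⁻¹ = Cᵀ :=
    Matrix.inv_eq_right_inv (by rw [← Matrix.transpose_mul, hCB, Matrix.transpose_one])
  set Cov : Matrix V V ℝ := ((1 - Λ)ᵀ)⁻¹ * Matrix.diagonal ω * (1 - Λ)⁻¹ with hCovdef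
  have hCov : Cov = Cᵀ * Matrix.diagonal ω * C := by rw [hCovdef, hBinv, hBTinv]
  -- entries of C
  have hCzero : ∀ p q, ¬ Relation.ReflTransGen E p q → C p q = 0 := by
    intro p q hpq
    rw [hCdef, Matrix.sum_apply]
    apply Finset.sum_eq_zero
    intro k _
    by_contra h
    rcases pow_entry E Λ hΛ k p q h with ⟨-, rfl⟩ | htg
    · exact hpq Relation.ReflTransGen.refl
    · exact hpq htg.to_reflTransGen
  have hCdiag : ∀ p, C p p = 1 := by
    intro p
    rw [hCdef, Matrix.sum_apply]
    rw [Finset.sum_eq_single_of_mem 0 (Finset.mem_range.mpr hN)]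
    · simp
    · intro k _ hk
      by_contra h
      rcases pow_entry E Λ hΛ k p p h with ⟨rfl, -⟩ | htg
      · exact hk rfl
      · exact hacyc p htg
  -- quadratic form
  have hq : ∀ x : V → ℝ, x ⬝ᵥ Cov *ᵥ x = (C *ᵥ x) ⬝ᵥ (Matrix.diagonal ω) *ᵥ (C *ᵥ x) := by
    intro x
    rw [hCov, ← Matrix.mulVec_mulVec, ← Matrix.mulVec_mulVec, Matrix.dotProduct_mulVec,
      Matrix.vecMul_transpose]
  have hqpos : ∀ x : V → ℝ, x ≠ 0 → 0 < x ⬝ᵥ Cov *ᵥ x := by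
    intro x hx
    rw [hq]
    have hCx : C *ᵥ x ≠ 0 := by
      intro h0
      apply hx
      have hid : (1 - Λ) *ᵥ (C *ᵥ x) = x := by
        rw [Matrix.mulVec_mulVec, hBC, Matrix.one_mulVec]
      rw [h0, Matrix.mulVec_zero] at hid
      exact hid.symm
    have hD : (Matrix.diagonal ω).PosDef := Matrix.PosDef.diagonal hω
    have := hD.dotProduct_mulVec_pos hCx
    simpa using this
  set S : Matrix Ai Ai ℝ := Cov.submatrix (Subtype.val) (Subtype.val) with hSdef
  have hSpos : ∀ x : Ai → ℝ, x ≠ 0 → 0 < x ⬝ᵥ S *ᵥ x := by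
    intro x hx
    set y : V → ℝ := fun v => if h : v ∈ Ai then x ⟨v, h⟩ else 0 with hydef
    have hyx : ∀ a : Ai, y ↑a = x a := fun a => by simp [hydef, a.2]
    have hy : y ≠ 0 := by
      obtain ⟨t, ht⟩ := Function.ne_iff.mp hx
      exact Function.ne_iff.mpr ⟨↑t, by rw [hyx t]; exact ht⟩
    have key : y ⬝ᵥ Cov *ᵥ y = x ⬝ᵥ S *ᵥ x := by
      calc y ⬝ᵥ Cov *ᵥ y = ∑ v : V, ∑ w : V, y v * (Cov v w * y w) := by
            simp [dotProduct, Matrix.mulVec, Finset.mul_sum]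
        _ = ∑ v ∈ Ai, ∑ w : V, y v * (Cov v w * y w) := by
            symm
            apply Finset.sum_subset (Finset.subset_univ Ai)
            intro v _ hv
            simp [hydef, hv]
        _ = ∑ v ∈ Ai, ∑ w ∈ Ai, y v * (Cov v w * y w) := by
            apply Finset.sum_congr rfl
            intro v _
            symm
            apply Finset.sum_subset (Finset.subset_univ Ai)
            intro w _ hw
            simp [hydef, hw]
        _ = ∑ a ∈ Ai.attach, ∑ b ∈ Ai.attach, x a * (Cov ↑a ↑b * x b) := by
            rw [← Finset.sum_attach Ai]
            apply Finset.sum_congr rfl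
            intro a _
            rw [← Finset.sum_attach Ai]
            apply Finset.sum_congr rfl
            intro b _
            rw [hyx a, hyx b]
        _ = x ⬝ᵥ S *ᵥ x := by
            simp [dotProduct, Matrix.mulVec, hSdef, Finset.mul_sum,
              Finset.univ_eq_attach]
    rw [← key]
    exact hqpos y hy
  have hSdet : IsUnit S.det := by
    by_contra h
    rw [isUnit_iff_ne_zero, not_not] at h
    obtain ⟨v, hv0, hv⟩ := Matrix.exists_mulVec_eq_zero_iff.mpr h
    have := hSpos v hv0
    rw [hv, dotProduct_zero] at this
    exact lt_irrefl 0 this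
  have hSinv : S⁻¹ * S = 1 := Matrix.nonsing_inv_mul S hSdet
  -- the vector u
  set u : V → ℝ := fun a => (if a = i then (1:ℝ) else 0) - Λ a i with hudef
  have hCovu : ∀ a, (Cov *ᵥ u) a = ω i * C i a := by
    have hu : u = (1 - Λ) *ᵥ Pi.single i 1 := by
      funext a
      simp [hudef, Matrix.mulVec_single, Matrix.sub_apply, Matrix.one_apply]
    intro a
    rw [hu, Matrix.mulVec_mulVec, hCov,
      Matrix.mul_assoc (Cᵀ * Matrix.diagonal ω) C (1 - Λ), hCB, Matrix.mul_one]
    simp [Matrix.mulVec_single, Matrix.mul_diagonal, Matrix.transpose_apply, mul_comm]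
  have hdot : ∀ a : V, (Cov *ᵥ u) a = Cov a i - ∑ b ∈ Ai.attach, Cov a ↑b * Λ ↑b i := by
    intro a
    have h1 : (Cov *ᵥ u) a = ∑ b : V, Cov a b * u b := by
      simp [Matrix.mulVec, dotProduct]
    rw [h1]
    have h2 : ∀ b : V, Cov a b * u b = (if b = i then Cov a b else 0) - Cov a b * Λ b i := by
      intro b
      rw [hudef]
      by_cases hb : b = i <;> simp [hb, mul_sub]
    rw [Finset.sum_congr rfl (fun b _ => h2 b), Finset.sum_sub_distrib]
    congr 1
    · simp
    · rw [Finset.sum_attach Ai (fun b => Cov a b * Λ b i)]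
      symm
      apply Finset.sum_subset (Finset.subset_univ Ai)
      intro b _ hb
      have hnE : ¬ E b i := fun hE => hb (hpai b hE)
      rw [hΛ b i hnE, mul_zero]
  have hCovu_zero : ∀ a ∈ Ai, (Cov *ᵥ u) a = 0 := fun a ha => by
    rw [hCovu a, hCzero i a (hdei a ha), mul_zero]
  have hCovu_i : (Cov *ᵥ u) i = ω i := by rw [hCovu i, hCdiag i, mul_one]
  set c : Ai → ℝ := fun b => Λ ↑b i with hcdef
  have hScol : S *ᵥ c = fun a : Ai => Cov ↑a i := by
    funext a
    have h0 := hCovu_zero ↑a a.2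
    rw [hdot ↑a] at h0
    have h1 : (S *ᵥ c) a = ∑ b ∈ Ai.attach, Cov ↑a ↑b * Λ ↑b i := by
      simp [Matrix.mulVec, dotProduct, hSdef, hcdef, Finset.univ_eq_attach]
    rw [h1]
    linarith
  have hSinvcol : S⁻¹ *ᵥ (fun a : Ai => Cov ↑a i) = c := by
    rw [← hScol, Matrix.mulVec_mulVec, hSinv, Matrix.one_mulVec]
  have hfinal : condVar Cov i Ai = Cov i i - ∑ a ∈ Ai.attach, Cov i ↑a * Λ ↑a i := by
    simp only [condVar]
    congr 1
    have h3 : ∀ a : Ai, (∑ b : Ai, Cov i ↑a * S⁻¹ a b * Cov ↑b i)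
        = Cov i ↑a * (S⁻¹ *ᵥ (fun b : Ai => Cov ↑b i)) a := by
      intro a
      simp [Matrix.mulVec, dotProduct, Finset.mul_sum, mul_assoc]
    rw [Finset.sum_congr rfl (fun a _ => h3 a), hSinvcol]
    simp [hcdef, Finset.univ_eq_attach]
  have h4 := hCovu_i
  rw [hdot i] at h4
  rw [hfinal]
  linarith

end Helpers

/-- if `i ∼_Π j` are distinct and `pa(i) ⊆ A_i ⊆ V \ de(i)`,
`pa(j) ⊆ A_j ⊆ V \ de(j)`, then every `Σ ∈ M_{G,Π}` satisfies the equal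
conditional variance constraint
`Σ_{ii} - Σ_{i,A_i}(Σ_{A_i,A_i})⁻¹Σ_{A_i,i} = Σ_{jj} - Σ_{j,A_j}(Σ_{A_j,A_j})⁻¹Σ_{A_j,j}`. -/
theorem stmt7 {V : Type*} [Fintype V] [DecidableEq V]
    (E : V → V → Prop) (hacyc : ∀ i, ¬ Relation.TransGen E i i)
    (r : V → V → Prop) (hr : Equivalence r)
    (i j : V) (hij : i ≠ j) (hrij : r i j)
    (Ai Aj : Finset V) (hiAi : i ∉ Ai) (hjAj : j ∉ Aj)
    (hpai : ∀ k, E k i → k ∈ Ai) (hdei : ∀ a ∈ Ai, ¬ Relation.ReflTransGen E i a)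
    (hpaj : ∀ k, E k j → k ∈ Aj) (hdej : ∀ a ∈ Aj, ¬ Relation.ReflTransGen E j a) :
    ∀ Cov ∈ PHModel E r, condVar Cov i Ai = condVar Cov j Aj := by
  rintro Cov ⟨Λ, ω, hΛ, hω, hrω, rfl⟩
  rw [aux E hacyc Λ hΛ ω hω i Ai hiAi hpai hdei,
    aux E hacyc Λ hΛ ω hω j Aj hjAj hpaj hdej]
  exact hrω i j hrij
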